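/- Let A be a Schur ring over a torsion-free abelian group G. Then A is closed under all Frobenius maps: for every α = Σ α_g g in A and every integer m, the element α^(m) = Σ α_g g^m lies in A. -/

import Mathlib

noncomputable def simpleQuantity (F : Type*) [Field F] {G : Type*} [Group G]
    (D : Finset G) : MonoidAlgebra F G :=
  ∑ g ∈ D, MonoidAlgebra.single g 1

structure SchurRing (F G : Type*) [Field F] [Group G] where
  parts : Set (Finset G)
  parts_nonempty : ∀ D ∈ parts, D.Nonempty
  cover : ∀ g : G, ∃ D ∈ parts, g ∈ D
  eq_of_mem : ∀ D₁ ∈ parts, ∀ D₂ ∈ parts, ∀ g : G, g ∈ D₁ → g ∈ D₂ → D₁ = D₂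
  one_mem : ({1} : Finset G) ∈ parts
  inv_mem : ∀ D ∈ parts, ∃ D' ∈ parts, ∀ g : G, g ∈ D' ↔ g⁻¹ ∈ D
  mul_mem : ∀ x ∈ Submodule.span F (simpleQuantity F '' parts),
    ∀ y ∈ Submodule.span F (simpleQuantity F '' parts),
    x * y ∈ Submodule.span F (simpleQuantity F '' parts)

noncomputable def SchurRing.span {F G : Type*} [Field F] [Group G] (A : SchurRing F G) :
    Submodule F (MonoidAlgebra F G) :=
  Submodule.span F (simpleQuantity F '' A.parts)

def SchurRing.IsASet {F G : Type*} [Field F] [Group G] (A : SchurRing F G)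
    (S : Set G) : Prop :=
  ∀ D ∈ A.parts, (∃ g ∈ D, g ∈ S) → ↑D ⊆ S

/-- The old Mathlib `Monoid.IsTorsionFree` (removed since): no nontrivial element has finite order. -/
def Monoid.IsTorsionFree (G : Type*) [Monoid G] : Prop :=
  ∀ g : G, g ≠ 1 → ¬IsOfFinOrder g

section Aux

open Finsupp

variable {F G : Type*} [Field F] [Group G]

theorem simpleQuantity_apply [DecidableEq G] (D : Finset G) (x : G) :
    (simpleQuantity F D).coeff x = if x ∈ D then 1 else 0 := by
  have h : (simpleQuantity F D).coeff x = ∑ g ∈ D, (MonoidAlgebra.single g (1 : F)).coeff x := by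
    rw [simpleQuantity, MonoidAlgebra.coeff_sum, Finsupp.finset_sum_apply]
  rw [h]
  simp only [MonoidAlgebra.coeff_single, Finsupp.single_apply]
  rw [Finset.sum_ite_eq' D x (fun _ => (1 : F))]

theorem SchurRing.sq_mem (A : SchurRing F G) {D : Finset G} (hD : D ∈ A.parts) :
    simpleQuantity F D ∈ A.span :=
  Submodule.subset_span ⟨D, hD, rfl⟩

/-- Membership in the span is equivalent to having coefficients constant on parts. -/
theorem SchurRing.mem_span_iff (A : SchurRing F G) (x : MonoidAlgebra F G) :
    x ∈ A.span ↔ ∀ D ∈ A.parts, ∀ g ∈ D, ∀ h ∈ D, x.coeff g = x.coeff h := by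
  classical
  constructor
  · intro hx
    induction hx using Submodule.span_induction with
    | mem y hy =>
      obtain ⟨D₀, hD₀, rfl⟩ := hy
      intro D hD g hg h hh
      rw [simpleQuantity_apply, simpleQuantity_apply]
      refine if_congr ?_ rfl rfl
      constructor
      · intro hgD₀
        have : D = D₀ := A.eq_of_mem D hD D₀ hD₀ g hg hgD₀
        exact this ▸ hh
      · intro hhD₀
        have : D = D₀ := A.eq_of_mem D hD D₀ hD₀ h hh hhD₀
        exact this ▸ hg
    | zero => intro D _ g _ h _; rfl
    | add y z _ _ hy hz =>
      intro D hD g hg h hh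
      show y.coeff g + z.coeff g = y.coeff h + z.coeff h
      rw [hy D hD g hg h hh, hz D hD g hg h hh]
    | smul c y _ hy =>
      intro D hD g hg h hh
      show c * y.coeff g = c * y.coeff h
      rw [hy D hD g hg h hh]
  · intro hx
    generalize hn : x.coeff.support.card = n
    induction n using Nat.strong_induction_on generalizing x with
    | _ n ih =>
      rcases eq_or_ne x 0 with rfl | hx0
      · exact zero_mem _
      · obtain ⟨g, hg⟩ : x.coeff.support.Nonempty :=
            Finsupp.support_nonempty_iff.mpr (mt MonoidAlgebra.coeff_eq_zero.mp hx0)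
        obtain ⟨D, hD, hgD⟩ := A.cover g
        set x' : MonoidAlgebra F G := x - x.coeff g • simpleQuantity F D with hx'def
        have hx'apply : ∀ y, x'.coeff y = x.coeff y - x.coeff g * (if y ∈ D then 1 else 0) := by
          intro y
          rw [hx'def, MonoidAlgebra.coeff_sub, Finsupp.sub_apply, MonoidAlgebra.coeff_smul,
            Finsupp.smul_apply, simpleQuantity_apply,
            smul_eq_mul]
        have hx'D : ∀ y ∈ D, x'.coeff y = 0 := by
          intro y hy
          rw [hx'apply y, if_pos hy, mul_one, hx D hD y hy g hgD, sub_self]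
        have hx'nD : ∀ y, y ∉ D → x'.coeff y = x.coeff y := by
          intro y hy
          rw [hx'apply y, if_neg hy, mul_zero, sub_zero]
        have hsupp : x'.coeff.support ⊆ x.coeff.support := by
          intro y hy
          rw [Finsupp.mem_support_iff] at hy ⊢
          by_cases hyD : y ∈ D
          · exact absurd (hx'D y hyD) hy
          · rwa [hx'nD y hyD] at hy
        have hssub : x'.coeff.support ⊂ x.coeff.support := by
          refine Finset.ssubset_iff_of_subset hsupp |>.mpr ⟨g, hg, ?_⟩
          rw [Finsupp.mem_support_iff, not_not]
          exact hx'D g hgD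
        have hconst : ∀ D₁ ∈ A.parts, ∀ a ∈ D₁, ∀ b ∈ D₁, x'.coeff a = x'.coeff b := by
          intro D₁ hD₁ a ha b hb
          rw [hx'apply a, hx'apply b, hx D₁ hD₁ a ha b hb]
          congr 1
          refine congrArg _ (if_congr ?_ rfl rfl)
          constructor
          · intro haD
            have : D₁ = D := A.eq_of_mem D₁ hD₁ D hD a ha haD
            exact this ▸ hb
          · intro hbD
            have : D₁ = D := A.eq_of_mem D₁ hD₁ D hD b hb hbD
            exact this ▸ ha
        have hx'mem : x' ∈ A.span :=
          ih x'.coeff.support.card (hn ▸ Finset.card_lt_card hssub) x' hconst rfl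
        have : x = x' + x.coeff g • simpleQuantity F D := by
          rw [hx'def]; abel
        rw [this]
        exact add_mem hx'mem (Submodule.smul_mem _ _ (A.sq_mem hD))

theorem SchurRing.one_mem_span (A : SchurRing F G) : (1 : MonoidAlgebra F G) ∈ A.span := by
  have h := A.sq_mem A.one_mem
  have : simpleQuantity F ({1} : Finset G) = 1 := by
    rw [simpleQuantity, Finset.sum_singleton, MonoidAlgebra.one_def]
  rwa [this] at h

theorem SchurRing.pow_mem_span (A : SchurRing F G) {x : MonoidAlgebra F G}
    (hx : x ∈ A.span) (n : ℕ) : x ^ n ∈ A.span := by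
  induction n with
  | zero => rw [pow_zero]; exact A.one_mem_span
  | succ n ihn => rw [pow_succ]; exact A.mul_mem _ ihn _ hx

theorem SchurRing.mapDomain_mem (A : SchurRing F G) (f : G → G)
    (hf : ∀ C ∈ A.parts,
      MonoidAlgebra.ofCoeff (Finsupp.mapDomain f (simpleQuantity F C).coeff) ∈ A.span)
    {x : MonoidAlgebra F G} (hx : x ∈ A.span) :
    MonoidAlgebra.ofCoeff (Finsupp.mapDomain f x.coeff) ∈ A.span := by
  induction hx using Submodule.span_induction with
  | mem y hy =>
    obtain ⟨C, hC, rfl⟩ := hy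
    exact hf C hC
  | zero =>
    rw [MonoidAlgebra.coeff_zero, Finsupp.mapDomain_zero, MonoidAlgebra.ofCoeff_zero]
    exact zero_mem _
  | add y z _ _ hy hz =>
    rw [MonoidAlgebra.coeff_add, Finsupp.mapDomain_add, MonoidAlgebra.ofCoeff_add]
    exact add_mem hy hz
  | smul c y _ hy =>
    rw [MonoidAlgebra.coeff_smul, Finsupp.mapDomain_smul, MonoidAlgebra.ofCoeff_smul]
    exact Submodule.smul_mem _ _ hy

/-- A coefficient ring hom induces a ring hom of monoid algebras. -/
noncomputable def mapRangeRingHom' {R S : Type*} [Semiring R] [Semiring S] (f : R →+* S) :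
    MonoidAlgebra R G →+* MonoidAlgebra S G :=
  MonoidAlgebra.liftNCRingHom
    (MonoidAlgebra.singleOneRingHom.comp f) (MonoidAlgebra.of S G)
    (by
      intro x y
      show Commute (MonoidAlgebra.single 1 (f x)) (MonoidAlgebra.single y 1)
      unfold Commute SemiconjBy
      rw [MonoidAlgebra.single_mul_single, MonoidAlgebra.single_mul_single, one_mul, mul_one,
        one_mul, mul_one])

theorem mapRangeRingHom'_single {R S : Type*} [Semiring R] [Semiring S] (f : R →+* S)
    (a : G) (b : R) :
    mapRangeRingHom' f (MonoidAlgebra.single a b) = MonoidAlgebra.single a (f b) := by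
  unfold mapRangeRingHom'
  show MonoidAlgebra.liftNC _ _ (MonoidAlgebra.single a b) = _
  rw [MonoidAlgebra.liftNC_single]
  show MonoidAlgebra.single 1 (f b) * MonoidAlgebra.single a 1 = _
  rw [MonoidAlgebra.single_mul_single, one_mul, mul_one]

theorem mapRangeRingHom'_apply {R S : Type*} [Semiring R] [Semiring S] (f : R →+* S)
    (x : MonoidAlgebra R G) (g : G) : (mapRangeRingHom' f x).coeff g = f (x.coeff g) := by
  induction x using MonoidAlgebra.induction_linear with
  | zero => rw [map_zero]; show (0 : S) = f 0; rw [f.map_zero]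
  | add a b ha hb =>
    rw [map_add]
    show (mapRangeRingHom' f a).coeff g + (mapRangeRingHom' f b).coeff g
      = f (a.coeff g + b.coeff g)
    rw [ha, hb, f.map_add]
  | single a b =>
    classical
    rw [mapRangeRingHom'_single]
    show Finsupp.single a (f b) g = f (Finsupp.single a b g)
    rw [Finsupp.single_apply, Finsupp.single_apply]
    split
    · rfl
    · rw [f.map_zero]

theorem mapRangeRingHom'_sum_single {R S : Type*} [Semiring R] [Semiring S] (f : R →+* S)
    (C : Finset G) (h : G → G) :
    mapRangeRingHom' f (∑ g ∈ C, MonoidAlgebra.single (h g) (1 : R))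
      = ∑ g ∈ C, MonoidAlgebra.single (h g) (1 : S) := by
  rw [map_sum]
  refine Finset.sum_congr rfl fun g _ => ?_
  rw [mapRangeRingHom'_single, f.map_one]

theorem pow_injective_of_torsionFree {G : Type*} [CommGroup G]
    (hTF : Monoid.IsTorsionFree G) {n : ℕ} (hn : n ≠ 0) :
    Function.Injective (fun g : G => g ^ n) := by
  intro a b hab
  simp only at hab
  by_contra hne
  have h1 : a * b⁻¹ ≠ 1 := by
    intro h
    exact hne (by rwa [mul_inv_eq_one] at h)
  refine hTF (a * b⁻¹) h1 ?_
  refine isOfFinOrder_iff_pow_eq_one.mpr ⟨n, Nat.pos_of_ne_zero hn, ?_⟩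
  rw [mul_pow, inv_pow, hab, mul_inv_cancel]

end Aux

section Main

open Finsupp

variable {F G : Type*} [Field F] [CharZero F] [CommGroup G]

/-- Freshman's dream over `ℤ[G]` modulo a prime `p`. -/
theorem sum_single_pow_prime_eq (C : Finset G) {p : ℕ} (hp : p.Prime) :
    ∃ β : MonoidAlgebra ℤ G,
      (∑ g ∈ C, MonoidAlgebra.single g (1 : ℤ)) ^ p
        = ∑ g ∈ C, MonoidAlgebra.single (g ^ p) (1 : ℤ) + (p : MonoidAlgebra ℤ G) * β := by
  classical
  induction C using Finset.induction_on with
  | empty =>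
    refine ⟨0, ?_⟩
    simp [zero_pow hp.ne_zero]
  | insert a s hnotmem ih =>
    obtain ⟨β, hβ⟩ := ih
    obtain ⟨r, hr⟩ := (Commute.all (MonoidAlgebra.single a (1 : ℤ))
      (∑ g ∈ s, MonoidAlgebra.single g (1 : ℤ))).exists_add_pow_prime_eq hp
    refine ⟨MonoidAlgebra.single a 1 * (∑ g ∈ s, MonoidAlgebra.single g (1 : ℤ)) * r + β, ?_⟩
    rw [Finset.sum_insert hnotmem, Finset.sum_insert hnotmem, hr, hβ,
      MonoidAlgebra.single_pow, one_pow]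
    ring

theorem SchurRing.frob_prime (A : SchurRing F G) (hTF : Monoid.IsTorsionFree G)
    {p : ℕ} (hp : p.Prime) {C : Finset G} (hC : C ∈ A.parts) :
    MonoidAlgebra.ofCoeff (Finsupp.mapDomain (fun g : G => g ^ p) (simpleQuantity F C).coeff)
      ∈ A.span := by
  classical
  haveI : Fact p.Prime := ⟨hp⟩
  -- the image of the simple quantity under the Frobenius map
  have hβeq : MonoidAlgebra.ofCoeff
      (Finsupp.mapDomain (fun g : G => g ^ p) (simpleQuantity F C).coeff)
      = ∑ g ∈ C, MonoidAlgebra.single (g ^ p) (1 : F) := by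
    rw [simpleQuantity, MonoidAlgebra.coeff_sum, Finsupp.mapDomain_finset_sum,
      MonoidAlgebra.ofCoeff_sum]
    refine Finset.sum_congr rfl fun g _ => ?_
    rw [MonoidAlgebra.coeff_single, Finsupp.mapDomain_single, MonoidAlgebra.ofCoeff_single]
  -- the counting function
  set c : G → ℕ := fun x => (C.filter fun t => t ^ p = x).card with hc
  have hc_le : ∀ x, c x ≤ 1 := by
    intro x
    refine Finset.card_le_one.mpr fun a ha b hb => ?_
    rw [Finset.mem_filter] at ha hb
    exact pow_injective_of_torsionFree hTF hp.ne_zero (ha.2.trans hb.2.symm)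
  have hvalF : ∀ x : G,
      (∑ g ∈ C, MonoidAlgebra.single (g ^ p) (1 : F)).coeff x = (c x : F) := by
    intro x
    have h1 : (∑ g ∈ C, MonoidAlgebra.single (g ^ p) (1 : F)).coeff x
        = ∑ g ∈ C, (MonoidAlgebra.single (g ^ p) (1 : F)).coeff x := by
      rw [MonoidAlgebra.coeff_sum, Finsupp.finset_sum_apply]
    rw [h1, Finset.sum_congr rfl fun g _ => (MonoidAlgebra.coeff_single_apply :
      (MonoidAlgebra.single (g ^ p) (1 : F)).coeff x = _), Finset.sum_boole]
  have hvalZ : ∀ x : G,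
      (∑ g ∈ C, MonoidAlgebra.single (g ^ p) (1 : ZMod p)).coeff x = (c x : ZMod p) := by
    intro x
    have h1 : (∑ g ∈ C, MonoidAlgebra.single (g ^ p) (1 : ZMod p)).coeff x
        = ∑ g ∈ C, (MonoidAlgebra.single (g ^ p) (1 : ZMod p)).coeff x := by
      rw [MonoidAlgebra.coeff_sum, Finsupp.finset_sum_apply]
    rw [h1, Finset.sum_congr rfl fun g _ => (MonoidAlgebra.coeff_single_apply :
      (MonoidAlgebra.single (g ^ p) (1 : ZMod p)).coeff x = _), Finset.sum_boole]
  -- the integral model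
  set a₀ : MonoidAlgebra ℤ G := ∑ g ∈ C, MonoidAlgebra.single g (1 : ℤ) with ha₀
  set N : G → ℤ := fun x => (a₀ ^ p).coeff x with hN
  -- transfer to F
  have hF : ∀ x : G, ((N x : ℤ) : F) = ((simpleQuantity F C) ^ p).coeff x := by
    intro x
    have hmap : mapRangeRingHom' (Int.castRingHom F) (a₀ ^ p)
        = (simpleQuantity F C) ^ p := by
      rw [map_pow]
      congr 1
      rw [ha₀, show (∑ g ∈ C, MonoidAlgebra.single g (1 : ℤ))
          = ∑ g ∈ C, MonoidAlgebra.single (id g) (1 : ℤ) from rfl,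
        mapRangeRingHom'_sum_single]
      rfl
    rw [← hmap, mapRangeRingHom'_apply]
    rfl
  -- transfer to ZMod p
  have hZ : ∀ x : G, ((N x : ℤ) : ZMod p) = (c x : ZMod p) := by
    intro x
    have hmap : mapRangeRingHom' (Int.castRingHom (ZMod p)) (a₀ ^ p)
        = ∑ g ∈ C, MonoidAlgebra.single (g ^ p) (1 : ZMod p) := by
      rw [map_pow]
      rw [ha₀, show (∑ g ∈ C, MonoidAlgebra.single g (1 : ℤ))
          = ∑ g ∈ C, MonoidAlgebra.single (id g) (1 : ℤ) from rfl,
        mapRangeRingHom'_sum_single]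
      haveI : CharP (MonoidAlgebra (ZMod p) G) p := by
        refine charP_of_injective_ringHom
          (f := (MonoidAlgebra.singleOneRingHom : ZMod p →+* MonoidAlgebra (ZMod p) G)) ?_ p
        intro u v huv
        have h : Finsupp.single (1 : G) u = Finsupp.single (1 : G) v := congrArg MonoidAlgebra.coeff huv
        exact Finsupp.single_injective _ h
      rw [sum_pow_char]
      refine Finset.sum_congr rfl fun g _ => ?_
      rw [show MonoidAlgebra.single (id g) (1 : ZMod p) ^ p
          = MonoidAlgebra.single (id g ^ p) ((1 : ZMod p) ^ p) from
        MonoidAlgebra.single_pow (id g) 1 p, one_pow]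
      rfl
    have h2 := congrArg (fun z : MonoidAlgebra (ZMod p) G => z.coeff x) hmap
    rw [mapRangeRingHom'_apply] at h2
    rw [show ((N x : ℤ) : ZMod p) = Int.castRingHom (ZMod p) (N x) from rfl, h2, hvalZ x]
  -- now conclude constancy on parts
  rw [hβeq, A.mem_span_iff]
  intro D hD g hg h hh
  rw [hvalF g, hvalF h]
  have hpowmem : (simpleQuantity F C) ^ p ∈ A.span :=
    A.pow_mem_span (A.sq_mem hC) p
  have hNeq : N g = N h := by
    have heq := (A.mem_span_iff _).mp hpowmem D hD g hg h hh
    have hcast : ((N g : ℤ) : F) = ((N h : ℤ) : F) := by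
      rw [hF g, hF h]; exact heq
    exact_mod_cast hcast
  have hceq : (c g : ZMod p) = (c h : ZMod p) := by
    rw [← hZ g, ← hZ h, hNeq]
  have hcgh : c g = c h := by
    have h2 : (2 : ℕ) ≤ p := hp.two_le
    rcases Nat.le_one_iff_eq_zero_or_eq_one.mp (hc_le g) with hg0 | hg1 <;>
      rcases Nat.le_one_iff_eq_zero_or_eq_one.mp (hc_le h) with hh0 | hh1
    · rw [hg0, hh0]
    · exfalso
      rw [hg0, hh1, Nat.cast_zero, Nat.cast_one] at hceq
      exact zero_ne_one hceq
    · exfalso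
      rw [hg1, hh0, Nat.cast_zero, Nat.cast_one] at hceq
      exact one_ne_zero hceq
    · rw [hg1, hh1]
  rw [hcgh]

theorem SchurRing.frob_nat (A : SchurRing F G) (hTF : Monoid.IsTorsionFree G)
    (n : ℕ) {x : MonoidAlgebra F G} (hx : x ∈ A.span) :
    MonoidAlgebra.ofCoeff (Finsupp.mapDomain (fun g : G => g ^ n) x.coeff) ∈ A.span := by
  classical
  induction n using Nat.strong_induction_on generalizing x with
  | _ n ih =>
    rcases eq_or_ne n 0 with rfl | hn0
    · -- g ^ 0 = 1
      have hfun : (fun g : G => g ^ (0 : ℕ)) = fun _ : G => (1 : G) := by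
        funext g; exact pow_zero g
      rw [hfun]
      have hmd : Finsupp.mapDomain (fun _ : G => (1 : G)) x.coeff
          = Finsupp.single (1 : G) (x.coeff.sum fun _ v => v) := by
        rw [Finsupp.mapDomain]
        rw [Finsupp.sum]
        rw [show (Finsupp.single (1 : G) (x.coeff.sum fun _ v => v) : G →₀ F)
          = Finsupp.singleAddHom (1 : G) (x.coeff.sum fun _ v => v) from rfl]
        rw [Finsupp.sum, map_sum]
        rfl
      rw [hmd]
      have : MonoidAlgebra.ofCoeff (Finsupp.single (1 : G) (x.coeff.sum fun _ v => v))
          = (x.coeff.sum fun _ v => v) • (1 : MonoidAlgebra F G) := by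
        rw [MonoidAlgebra.one_def, MonoidAlgebra.ofCoeff_single]
        rw [MonoidAlgebra.smul_single]
        rw [smul_eq_mul, mul_one]
      rw [this]
      exact Submodule.smul_mem _ _ A.one_mem_span
    rcases eq_or_ne n 1 with rfl | hn1
    · have hfun : (fun g : G => g ^ (1 : ℕ)) = id := by
        funext g; exact pow_one g
      rw [hfun, Finsupp.mapDomain_id]
      exact hx
    · -- n ≥ 2
      set p : ℕ := n.minFac with hpdef
      have hp : p.Prime := Nat.minFac_prime hn1
      set k : ℕ := n / p with hkdef
      have hnk : n = p * k := (Nat.mul_div_cancel' n.minFac_dvd).symm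
      have hklt : k < n := Nat.div_lt_self (Nat.pos_of_ne_zero hn0) hp.one_lt
      have hfun : (fun g : G => g ^ n) = (fun g : G => g ^ k) ∘ (fun g : G => g ^ p) := by
        funext g
        show g ^ n = (g ^ p) ^ k
        rw [hnk, pow_mul]
      rw [hfun, Finsupp.mapDomain_comp]
      refine ih k hklt
        (x := MonoidAlgebra.ofCoeff (Finsupp.mapDomain (fun g : G => g ^ p) x.coeff)) ?_
      exact A.mapDomain_mem _ (fun C hC => A.frob_prime hTF hp hC) hx

theorem SchurRing.frob_inv (A : SchurRing F G) {x : MonoidAlgebra F G} (hx : x ∈ A.span) :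
    MonoidAlgebra.ofCoeff (Finsupp.mapDomain (fun g : G => g⁻¹) x.coeff) ∈ A.span := by
  classical
  refine A.mapDomain_mem _ (fun C hC => ?_) hx
  obtain ⟨D', hD', hiff⟩ := A.inv_mem C hC
  have himg : D' = C.image (fun g => g⁻¹) := by
    ext h
    rw [hiff, Finset.mem_image]
    constructor
    · intro hhC
      exact ⟨h⁻¹, hhC, inv_inv h⟩
    · rintro ⟨a, ha, rfl⟩
      rwa [inv_inv]
  have : MonoidAlgebra.ofCoeff (Finsupp.mapDomain (fun g : G => g⁻¹) (simpleQuantity F C).coeff)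
      = simpleQuantity F D' := by
    rw [simpleQuantity, MonoidAlgebra.coeff_sum, Finsupp.mapDomain_finset_sum,
      MonoidAlgebra.ofCoeff_sum, himg, simpleQuantity,
      Finset.sum_image (fun a _ b _ hab => inv_injective hab)]
    refine Finset.sum_congr rfl fun g _ => ?_
    rw [MonoidAlgebra.coeff_single, Finsupp.mapDomain_single, MonoidAlgebra.ofCoeff_single]
  rw [this]
  exact A.sq_mem hD'

end Main

/-- Schur rings over torsion-free abelian groups are closed under all Frobenius
maps `Σ α_g g ↦ Σ α_g g^m`. -/
theorem frobenius_mem {F G : Type*} [Field F] [CharZero F] [CommGroup G]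
    (hTF : Monoid.IsTorsionFree G) (A : SchurRing F G)
    (α : MonoidAlgebra F G) (hα : α ∈ A.span) (m : ℤ) :
    MonoidAlgebra.ofCoeff (Finsupp.mapDomain (fun g : G => g ^ m) α.coeff) ∈ A.span := by
  rcases le_or_gt 0 m with hm | hm
  · have hfun : (fun g : G => g ^ m) = fun g : G => g ^ m.toNat := by
      funext g
      rw [← zpow_natCast, Int.toNat_of_nonneg hm]
    rw [hfun]
    exact A.frob_nat hTF m.toNat hα
  · have hfun : (fun g : G => g ^ m)
        = (fun g : G => g⁻¹) ∘ (fun g : G => g ^ (-m).toNat) := by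
      funext g
      show g ^ m = (g ^ (-m).toNat)⁻¹
      rw [← zpow_natCast, Int.toNat_of_nonneg (by omega), ← zpow_neg, neg_neg]
    rw [hfun, Finsupp.mapDomain_comp]
    exact A.frob_inv
      (x := MonoidAlgebra.ofCoeff (Finsupp.mapDomain (fun g : G => g ^ (-m).toNat) α.coeff))
      (A.frob_nat hTF (-m).toNat hα)
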